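/- Let G be a finitely generated LPF group with positive rank gradient, let n be a natural number, and let H₁, …, Hₙ be finitely generated subgroups of infinite index in G. Then the profinite measure of the product set satisfies μ(H₁H₂⋯Hₙ) = 0. -/

import Mathlib

open scoped Pointwise

universe u

/-- `d(H)`: the smallest cardinality of a generating set of the subgroup `H`. -/
noncomputable def subgroupRank {G : Type u} [Group G] (H : Subgroup G) : ℕ :=
  sInf {n : ℕ | ∃ S : Finset G, S.card = n ∧ Subgroup.closure (S : Set G) = H}

/-- The rank gradient `∇G = inf (d(U) - 1)/[G : U]` over finite index subgroups `U`. -/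
noncomputable def rankGradient (G : Type u) [Group G] : ℝ :=
  sInf {r : ℝ | ∃ U : Subgroup G, U.FiniteIndex ∧
    r = ((subgroupRank U : ℝ) - 1) / (U.index : ℝ)}

/-- `G` is LERF if every finitely generated subgroup is an intersection of
finite index subgroups. -/
def IsLERF (G : Type u) [Group G] : Prop :=
  ∀ H : Subgroup G, H.FG →
    ∃ 𝒮 : Set (Subgroup G), (∀ U ∈ 𝒮, U.FiniteIndex) ∧ H = sInf 𝒮

/-- `G` is LPF if every finitely generated subgroup of infinite index is contained in
finite index subgroups of arbitrarily large index. -/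
def IsLPF (G : Type u) [Group G] : Prop :=
  ∀ H : Subgroup G, H.FG → H.index = 0 →
    ∀ n : ℕ, ∃ U : Subgroup G, H ≤ U ∧ U.FiniteIndex ∧ n ≤ U.index

/-- An epimorphism from `G` onto a finite group. -/
structure FiniteQuotient (G : Type u) [Group G] where
  K : Type u
  [grp : Group K]
  [fin : Fintype K]
  φ : G →* K
  surj : Function.Surjective φ

attribute [instance] FiniteQuotient.grp FiniteQuotient.fin

/-- The profinite measure `μ(S) = inf |φ(S)|/|φ(G)|` over epimorphisms `φ` from `G`
onto finite groups. -/
noncomputable def profiniteMeasure {G : Type u} [Group G] (S : Set G) : ℝ :=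
  sInf {r : ℝ | ∃ q : FiniteQuotient G,
    r = (Set.ncard (q.φ '' S) : ℝ) / (Fintype.card q.K : ℝ)}

/-- The product set `H₁H₂⋯Hₙ`. -/
def productSet {G : Type u} [Group G] {n : ℕ} (H : Fin n → Subgroup G) : Set G :=
  {g : G | ∃ f : Fin n → G, (∀ i, f i ∈ H i) ∧ g = (List.ofFn f).prod}

section Auxiliary

variable {G : Type u} [Group G]

private lemma conj_hom_comp (a b : G) :
    ((MulAut.conj a).toMonoidHom.comp (MulAut.conj b).toMonoidHom : G →* G)
      = (MulAut.conj (a * b)).toMonoidHom := by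
  ext x
  simp [mul_assoc]

private lemma ncard_iUnion_le_sum {α : Type*} {ι : Type*} [Fintype ι] [Finite α]
    (g : ι → Set α) : (⋃ i, g i).ncard ≤ ∑ i, (g i).ncard := by
  classical
  have key : ∀ s : Finset ι, (⋃ i ∈ s, g i).ncard ≤ ∑ i ∈ s, (g i).ncard := by
    intro s
    induction s using Finset.induction_on with
    | empty => simp
    | @insert a s ha ih =>
      rw [Finset.set_biUnion_insert, Finset.sum_insert ha]
      exact (Set.ncard_union_le _ _).trans (add_le_add le_rfl ih)
  have h1 : (⋃ i, g i) = ⋃ i ∈ Finset.univ, g i := by simp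
  rw [h1]
  exact key Finset.univ

/-- The key combinatorial decomposition: a product `(y₁a₁)(y₂a₂)⋯(yₙaₙ)` with `aᵢ ∈ Aᵢ`
equals `t · (y₁⋯yₙ)` where `t` lies in the subgroup generated by the conjugates
`(y₁⋯yᵢ) Aᵢ (y₁⋯yᵢ)⁻¹`. -/
private lemma cover_aux :
    ∀ (n : ℕ) (A : Fin n → Subgroup G) (y a : Fin n → G), (∀ i, a i ∈ A i) →
    ∃ t ∈ ⨆ i : Fin n,
        (A i).map (MulAut.conj (((List.ofFn y).take ((i : ℕ) + 1)).prod)).toMonoidHom,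
      (List.ofFn (fun i => y i * a i)).prod = t * (List.ofFn y).prod := by
  intro n
  induction n with
  | zero =>
    intro A y a _
    exact ⟨1, one_mem _, by simp⟩
  | succ n ih =>
    intro A y a ha
    obtain ⟨t', ht', hprod⟩ := ih (fun i => A i.succ) (fun i => y i.succ)
      (fun i => a i.succ) (fun i => ha i.succ)
    have hz0 : ((List.ofFn y).take (((0 : Fin (n + 1)) : ℕ) + 1)).prod = y 0 := by
      rw [List.ofFn_succ]
      simp
    have hzsucc : ∀ i : Fin n,
        ((List.ofFn y).take ((i : ℕ) + 1 + 1)).prod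
          = y 0 * ((List.ofFn (fun j : Fin n => y j.succ)).take ((i : ℕ) + 1)).prod := by
      intro i
      rw [List.ofFn_succ, List.take_succ_cons, List.prod_cons]
    refine ⟨(MulAut.conj (y 0)) (a 0) * (MulAut.conj (y 0)) t', ?_, ?_⟩
    · apply mul_mem
      · refine Subgroup.mem_iSup_of_mem (0 : Fin (n + 1)) ?_
        rw [hz0]
        exact ⟨a 0, ha 0, rfl⟩
      · have hle : (⨆ i : Fin n, ((A i.succ).map
            (MulAut.conj (((List.ofFn (fun j : Fin n => y j.succ)).take
              ((i : ℕ) + 1)).prod)).toMonoidHom)).map (MulAut.conj (y 0)).toMonoidHom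
            ≤ ⨆ i : Fin (n + 1), (A i).map
                (MulAut.conj (((List.ofFn y).take ((i : ℕ) + 1)).prod)).toMonoidHom := by
          rw [Subgroup.map_iSup]
          refine iSup_le fun i => ?_
          rw [Subgroup.map_map, conj_hom_comp, ← hzsucc i]
          have h2 : ((i : ℕ) + 1 + 1) = ((i.succ : Fin (n + 1)) : ℕ) + 1 := by
            simp [Fin.val_succ]
          rw [h2]
          exact le_iSup (fun j : Fin (n + 1) => (A j).map
            (MulAut.conj (((List.ofFn y).take ((j : ℕ) + 1)).prod)).toMonoidHom) i.succ
        exact hle (Subgroup.mem_map_of_mem _ ht')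
    · rw [List.ofFn_succ (f := fun i => y i * a i), List.ofFn_succ (f := y),
        List.prod_cons, List.prod_cons]
      have : (List.ofFn fun i : Fin n => y i.succ * a i.succ).prod
          = t' * (List.ofFn fun i : Fin n => y i.succ).prod := hprod
      rw [this]
      simp only [MulAut.conj_apply]
      group

end Auxiliary

theorem stmt_10 {G : Type u} [Group G] (hfg : Group.FG G) (hlpf : IsLPF G)
    (hrg : 0 < rankGradient G) (n : ℕ) (H : Fin n → Subgroup G)
    (hHfg : ∀ i, (H i).FG) (hHi : ∀ i, (H i).index = 0) :
    profiniteMeasure (productSet H) = 0 := by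
  classical
  -- The rank gradient lower bound on ranks of finite index subgroups.
  have hbdd : BddBelow {r : ℝ | ∃ U : Subgroup G, U.FiniteIndex ∧
      r = ((subgroupRank U : ℝ) - 1) / (U.index : ℝ)} := by
    refine ⟨-1, ?_⟩
    rintro r ⟨U, hU, rfl⟩
    have h1 : (1 : ℝ) ≤ (U.index : ℝ) := by
      exact_mod_cast Nat.one_le_iff_ne_zero.mpr hU.index_ne_zero
    have h0 : (0 : ℝ) ≤ (subgroupRank U : ℝ) := Nat.cast_nonneg _
    rw [le_div_iff₀ (by linarith)]
    nlinarith
  have hgrad : ∀ U : Subgroup G, U.index ≠ 0 →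
      rankGradient G * (U.index : ℝ) ≤ (subgroupRank U : ℝ) - 1 := by
    intro U hU
    have hmem : ((subgroupRank U : ℝ) - 1) / (U.index : ℝ) ∈
        {r : ℝ | ∃ U : Subgroup G, U.FiniteIndex ∧
          r = ((subgroupRank U : ℝ) - 1) / (U.index : ℝ)} := ⟨U, ⟨hU⟩, rfl⟩
    have hle := csInf_le hbdd hmem
    have hpos : (0 : ℝ) < (U.index : ℝ) := by
      exact_mod_cast Nat.pos_of_ne_zero hU
    rw [le_div_iff₀ hpos] at hle
    exact hle
  set ε := rankGradient G with hεdef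
  -- ranks of the subgroups H i
  haveI hHgfg : ∀ i, Group.FG (H i) := fun i => (Group.fg_iff_subgroup_fg (H i)).mpr (hHfg i)
  set D : Fin n → ℕ := fun i => Group.rank (H i) with hDdef
  -- choose N with ∑ D i < ε * N
  obtain ⟨N, hN⟩ := exists_nat_gt ((∑ i, (D i : ℝ)) / ε)
  have hNlt : (∑ i, (D i : ℝ)) < ε * N := by
    rw [div_lt_iff₀ hrg] at hN
    linarith [hN]
  -- LPF gives U i ⊇ H i of index ≥ N
  have hUex : ∀ i, ∃ U : Subgroup G, H i ≤ U ∧ U.FiniteIndex ∧ N ≤ U.index :=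
    fun i => hlpf (H i) (hHfg i) (hHi i) N
  choose U hHU hUfi hNU using hUex
  haveI : ∀ i, (U i).FiniteIndex := hUfi
  -- the normal finite index subgroup W
  set W : Subgroup G := ⨅ i, (U i).normalCore with hWdef
  haveI hWfi : W.FiniteIndex :=
    Subgroup.finiteIndex_iInf fun i => Subgroup.finiteIndex_normalCore (U i)
  have hWnormal : W.Normal := by
    constructor
    intro x hx g
    rw [Subgroup.mem_iInf] at hx ⊢
    exact fun i => (Subgroup.normalCore_normal (U i)).conj_mem x (hx i) g
  have hWU : ∀ i, W ≤ U i := fun i => (iInf_le _ i).trans (Subgroup.normalCore_le (U i))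
  have hWne : W.index ≠ 0 := hWfi.index_ne_zero
  -- the relative indices p i
  set p : Fin n → ℕ := fun i => W.relIndex (H i) with hpdef
  have hpne : ∀ i, p i ≠ 0 := by
    intro i hzero
    have hdvd : p i ∣ W.index :=
      Subgroup.relIndex_dvd_index_of_normal (H := W) (K := H i)
    rw [hzero] at hdvd
    exact hWne (zero_dvd_iff.mp hdvd)
  have hpN : ∀ i, p i * N ≤ W.index := by
    intro i
    have hUine : W.relIndex (U i) ≠ 0 := by
      intro hzero
      have hdvd : W.relIndex (U i) ∣ W.index :=
        Subgroup.relIndex_dvd_index_of_normal (H := W) (K := U i)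
      rw [hzero] at hdvd
      exact hWne (zero_dvd_iff.mp hdvd)
    have h1 : p i ≤ W.relIndex (U i) :=
      Subgroup.relIndex_le_of_le_right (hHU i) hUine
    have h2 : W.relIndex (U i) * (U i).index = W.index :=
      Subgroup.relIndex_mul_index (hWU i)
    calc p i * N ≤ W.relIndex (U i) * (U i).index :=
          Nat.mul_le_mul h1 (hNU i)
      _ = W.index := h2
  -- Schreier: generating sets for W ⊓ H i
  have hgen : ∀ i, ∃ F : Finset G, F.card ≤ p i * D i ∧
      Subgroup.closure (F : Set G) = W ⊓ H i := by
    intro i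
    haveI : (W.subgroupOf (H i)).FiniteIndex := ⟨hpne i⟩
    have hrank : Group.rank (W.subgroupOf (H i)) ≤ p i * D i :=
      Subgroup.rank_le_index_mul_rank (W.subgroupOf (H i))
    obtain ⟨S, hScard, hSclosure⟩ := Group.rank_spec (W.subgroupOf (H i))
    refine ⟨S.image (fun x => ((H i).subtype ((W.subgroupOf (H i)).subtype x))), ?_, ?_⟩
    · calc (S.image _).card ≤ S.card := Finset.card_image_le
        _ = Group.rank (W.subgroupOf (H i)) := hScard
        _ ≤ p i * D i := hrank
    · rw [Finset.coe_image]
      have himg : (fun x => ((H i).subtype ((W.subgroupOf (H i)).subtype x))) '' (S : Set _)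
          = (H i).subtype '' ((W.subgroupOf (H i)).subtype '' (S : Set _)) := by
        rw [Set.image_image]
      rw [himg, ← MonoidHom.map_closure, ← MonoidHom.map_closure, hSclosure]
      have h1 : Subgroup.map (W.subgroupOf (H i)).subtype ⊤ = W.subgroupOf (H i) := by
        rw [← MonoidHom.range_eq_map, Subgroup.range_subtype]
      rw [h1, Subgroup.subgroupOf_map_subtype]
  choose F hFcard hFclosure using hgen
  -- the coset spaces
  set Q : Fin n → Type u := fun i => (H i) ⧸ (W.subgroupOf (H i)) with hQdef
  haveI hQfin : ∀ i, Finite (Q i) := by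
    intro i
    haveI : (W.subgroupOf (H i)).FiniteIndex := ⟨hpne i⟩
    exact inferInstance
  haveI hQfintype : ∀ i, Fintype (Q i) := fun i => Fintype.ofFinite _
  -- combinatorial data for each combination of cosets
  set yc : (∀ i, Q i) → Fin n → G := fun c i => ((c i).out : G) with hycdef
  set T : (∀ i, Q i) → Subgroup G := fun c => ⨆ i : Fin n,
    (W ⊓ H i).map (MulAut.conj (((List.ofFn (yc c)).take ((i : ℕ) + 1)).prod)).toMonoidHom
    with hTdef
  -- T c is contained in W
  have hTW : ∀ c, T c ≤ W := by
    intro c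
    refine iSup_le fun i => ?_
    rintro x ⟨w, hw, rfl⟩
    exact hWnormal.conj_mem w hw.1 _
  -- a common generating finset for T c
  set Fc : (∀ i, Q i) → Finset G := fun c => Finset.univ.biUnion (fun i =>
    (F i).image (fun g => (MulAut.conj (((List.ofFn (yc c)).take ((i : ℕ) + 1)).prod)) g))
    with hFcdef
  have hFcSet : ∀ c, ((Fc c : Finset G) : Set G)
      = ⋃ i : Fin n, (((MulAut.conj (((List.ofFn (yc c)).take
          ((i : ℕ) + 1)).prod)).toMonoidHom : G →* G) '' (F i : Set G)) := by
    intro c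
    ext x
    simp [hFcdef]
  have hTclos : ∀ c, Subgroup.closure ((Fc c : Finset G) : Set G) = T c := by
    intro c
    rw [hFcSet c, Subgroup.closure_iUnion]
    exact iSup_congr fun i => by rw [← MonoidHom.map_closure, hFclosure i]
  -- T c is generated by few elements
  have hTrank : ∀ c, (subgroupRank (T c) : ℝ) ≤ ∑ i, (p i : ℝ) * (D i : ℝ) := by
    intro c
    have h2 : subgroupRank (T c) ≤ (Fc c).card := Nat.sInf_le ⟨Fc c, rfl, hTclos c⟩
    have h3 : (Fc c).card ≤ ∑ i, (p i * D i) := by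
      calc (Fc c).card ≤ ∑ i, ((F i).image
            (fun g => (MulAut.conj (((List.ofFn (yc c)).take
              ((i : ℕ) + 1)).prod)) g)).card := Finset.card_biUnion_le
        _ ≤ ∑ i, (p i * D i) := by
            refine Finset.sum_le_sum fun i _ => ?_
            exact Finset.card_image_le.trans (hFcard i)
    calc (subgroupRank (T c) : ℝ) ≤ ((∑ i, (p i * D i) : ℕ) : ℝ) := by
          exact_mod_cast h2.trans h3
      _ = ∑ i, (p i : ℝ) * (D i : ℝ) := by push_cast; rfl
  -- T c has infinite index
  have hTinf : ∀ c, (T c).index = 0 := by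
    intro c
    by_contra hTne
    have h1 : ε * ((T c).index : ℝ) ≤ (subgroupRank (T c) : ℝ) - 1 := hgrad _ hTne
    have h2 : (W.index : ℝ) ≤ ((T c).index : ℝ) := by
      have := Nat.le_of_dvd (Nat.pos_of_ne_zero hTne) (Subgroup.index_dvd_of_le (hTW c))
      exact_mod_cast this
    have hωpos : (0 : ℝ) < (W.index : ℝ) := by
      exact_mod_cast Nat.pos_of_ne_zero hWne
    have hNpos : (0 : ℝ) < (N : ℝ) := by
      rcases Nat.eq_zero_or_pos N with h | h
      · exfalso
        rw [h] at hNlt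
        push_cast at hNlt
        have : (0:ℝ) ≤ ∑ i, (D i : ℝ) := Finset.sum_nonneg fun i _ => Nat.cast_nonneg _
        linarith
      · exact_mod_cast h
    have h4 : ∑ i, (p i : ℝ) * (D i : ℝ) ≤ (W.index : ℝ) / N * ∑ i, (D i : ℝ) := by
      rw [Finset.mul_sum]
      refine Finset.sum_le_sum fun i _ => ?_
      have : (p i : ℝ) ≤ (W.index : ℝ) / N := by
        rw [le_div_iff₀ hNpos]
        exact_mod_cast hpN i
      exact mul_le_mul_of_nonneg_right this (Nat.cast_nonneg _)
    have h5 : (W.index : ℝ) / N * ∑ i, (D i : ℝ) < (W.index : ℝ) / N * (ε * N) := by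
      refine mul_lt_mul_of_pos_left hNlt (by positivity)
    have h6 : (W.index : ℝ) / N * (ε * N) = ε * (W.index : ℝ) := by
      field_simp
    have h7 : ε * ((T c).index : ℝ) ≥ ε * (W.index : ℝ) :=
      mul_le_mul_of_nonneg_left h2 (le_of_lt hrg)
    have := hTrank c
    linarith
  -- T c is finitely generated
  have hTfg : ∀ c, (T c).FG := fun c => ⟨Fc c, hTclos c⟩
  -- the number of coset combinations
  haveI : Fintype (∀ i, Q i) := Pi.instFintype
  set P : ℕ := Fintype.card (∀ i, Q i) with hPdef
  -- the key estimate
  have key : ∀ m : ℕ, 0 < m →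
      profiniteMeasure (productSet H) ≤ (P : ℝ) / (m : ℝ) := by
    intro m hm
    have hVex : ∀ c : (∀ i, Q i), ∃ V : Subgroup G, T c ≤ V ∧ V.FiniteIndex ∧ m ≤ V.index :=
      fun c => hlpf (T c) (hTfg c) (hTinf c) m
    choose V hTV hVfi hmV using hVex
    haveI : ∀ c, (V c).FiniteIndex := hVfi
    haveI : ∀ c, ((V c).normalCore).FiniteIndex := fun c =>
      Subgroup.finiteIndex_normalCore (V c)
    haveI : ∀ c, ((V c).normalCore).Normal := fun c => Subgroup.normalCore_normal _
    haveI : ∀ c, Finite (G ⧸ (V c).normalCore) := fun c =>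
      inferInstance
    haveI : ∀ c, Fintype (G ⧸ (V c).normalCore) := fun c => Fintype.ofFinite _
    haveI : Fintype (∀ c : (∀ i, Q i), G ⧸ (V c).normalCore) := Pi.instFintype
    set φ : G →* (∀ c : (∀ i, Q i), G ⧸ (V c).normalCore) :=
      Pi.monoidHom (fun c => QuotientGroup.mk' ((V c).normalCore)) with hφdef
    set K : Subgroup (∀ c : (∀ i, Q i), G ⧸ (V c).normalCore) := φ.range with hKdef
    haveI : Fintype K := Fintype.ofFinite _
    set ψ : G →* K := φ.rangeRestrict with hψdef
    have hψsurj : Function.Surjective ψ := MonoidHom.rangeRestrict_surjective φ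
    have hkerle : ∀ c, ψ.ker ≤ V c := by
      intro c
      rw [hψdef, MonoidHom.ker_rangeRestrict]
      intro x hx
      rw [MonoidHom.mem_ker] at hx
      have h1 : (QuotientGroup.mk' ((V c).normalCore)) x = 1 := congrFun hx c
      have hxc : x ∈ (V c).normalCore := (QuotientGroup.eq_one_iff x).mp h1
      exact (Subgroup.normalCore_le (V c)) hxc
    -- the quotient
    set q : FiniteQuotient G := ⟨K, ψ, hψsurj⟩ with hqdef
    -- the covering of the product set
    have hcover : ψ '' productSet H ⊆ ⋃ c : (∀ i, Q i),
        (fun x => x * ψ ((List.ofFn (yc c)).prod)) '' (((V c).map ψ : Subgroup K) : Set K) := by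
      rintro _ ⟨g, hg, rfl⟩
      obtain ⟨f, hf, rfl⟩ := hg
      set c : ∀ i, Q i := fun i => QuotientGroup.mk (⟨f i, hf i⟩ : H i) with hcdef
      have hmem : ∀ i, (yc c i)⁻¹ * f i ∈ W ⊓ H i := by
        intro i
        have h1 : (QuotientGroup.mk ((c i).out) : Q i)
            = QuotientGroup.mk (⟨f i, hf i⟩ : H i) := by
          rw [QuotientGroup.out_eq']
        have h2 : ((c i).out)⁻¹ * (⟨f i, hf i⟩ : H i) ∈ W.subgroupOf (H i) :=
          QuotientGroup.eq.mp h1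
        have h3 : (((c i).out)⁻¹ * (⟨f i, hf i⟩ : H i) : H i).val ∈ W :=
          Subgroup.mem_subgroupOf.mp h2
        rw [Subgroup.mem_inf]
        refine ⟨by simpa using h3, ?_⟩
        exact mul_mem (inv_mem (((c i).out).property)) (hf i)
      obtain ⟨t, ht, hident⟩ := cover_aux n (fun i => W ⊓ H i) (yc c)
        (fun i => (yc c i)⁻¹ * f i) hmem
      have hfy : (fun i => yc c i * ((yc c i)⁻¹ * f i)) = f := by
        funext i
        group
      rw [hfy] at hident
      have htT : t ∈ T c := ht
      have htV : t ∈ V c := hTV c htT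
      refine Set.mem_iUnion.mpr ⟨c, ⟨ψ t, Subgroup.mem_map_of_mem ψ htV, ?_⟩⟩
      rw [hident, map_mul]
    -- counting
    have hKpos : (0 : ℝ) < (Fintype.card K : ℝ) := by
      exact_mod_cast Fintype.card_pos
    have hmpos : (0 : ℝ) < (m : ℝ) := by exact_mod_cast hm
    have hper : ∀ c : (∀ i, Q i),
        (Set.ncard ((fun x => x * ψ ((List.ofFn (yc c)).prod)) ''
          (((V c).map ψ : Subgroup K) : Set K)) : ℝ) ≤ (Fintype.card K : ℝ) / m := by
      intro c
      have hinj : Function.Injective (fun x : K => x * ψ ((List.ofFn (yc c)).prod)) :=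
        mul_left_injective _
      rw [Set.ncard_image_of_injective _ hinj]
      have hidx : ((V c).map ψ).index = (V c).index := by
        rw [Subgroup.index_map, MonoidHom.range_eq_top_of_surjective ψ hψsurj,
          Subgroup.index_top, mul_one, sup_eq_left.mpr (hkerle c)]
      have hcard : Nat.card ((V c).map ψ) * ((V c).map ψ).index = Nat.card K :=
        Subgroup.card_mul_index _
      have hncard : (((V c).map ψ : Subgroup K) : Set K).ncard
          = Nat.card ((V c).map ψ) := by
        rw [← Nat.card_coe_set_eq, SetLike.coe_sort_coe]
      rw [hncard]
      rw [le_div_iff₀ hmpos]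
      have h1 : Nat.card ((V c).map ψ) * m ≤ Nat.card ((V c).map ψ) * ((V c).map ψ).index := by
        refine Nat.mul_le_mul_left _ ?_
        rw [hidx]
        exact hmV c
      have h2 : (Nat.card ((V c).map ψ) * m : ℕ) ≤ Nat.card K := h1.trans_eq hcard
      have h3 : Nat.card K = Fintype.card K := Nat.card_eq_fintype_card
      exact_mod_cast h3 ▸ h2
    have hncard_total : (Set.ncard (ψ '' productSet H) : ℝ)
        ≤ (P : ℝ) * ((Fintype.card K : ℝ) / m) := by
      have h1 : Set.ncard (ψ '' productSet H) ≤ ∑ c : (∀ i, Q i),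
          Set.ncard ((fun x => x * ψ ((List.ofFn (yc c)).prod)) ''
            (((V c).map ψ : Subgroup K) : Set K)) :=
        (Set.ncard_le_ncard hcover (Set.toFinite _)).trans (ncard_iUnion_le_sum _)
      calc (Set.ncard (ψ '' productSet H) : ℝ)
          ≤ ∑ c : (∀ i, Q i), (Set.ncard ((fun x => x * ψ ((List.ofFn (yc c)).prod)) ''
              (((V c).map ψ : Subgroup K) : Set K)) : ℝ) := by exact_mod_cast h1
        _ ≤ ∑ _c : (∀ i, Q i), (Fintype.card K : ℝ) / m :=
            Finset.sum_le_sum fun c _ => hper c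
        _ = (P : ℝ) * ((Fintype.card K : ℝ) / m) := by
            simp only [Finset.sum_const, Finset.card_univ, nsmul_eq_mul, hPdef]
    -- conclude
    have hqmem : (Set.ncard (q.φ '' productSet H) : ℝ) / (Fintype.card q.K : ℝ) ∈
        {r : ℝ | ∃ q' : FiniteQuotient G,
          r = (Set.ncard (q'.φ '' productSet H) : ℝ) / (Fintype.card q'.K : ℝ)} := ⟨q, rfl⟩
    have hmbdd : BddBelow {r : ℝ | ∃ q' : FiniteQuotient G,
        r = (Set.ncard (q'.φ '' productSet H) : ℝ) / (Fintype.card q'.K : ℝ)} := by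
      refine ⟨0, ?_⟩
      rintro r ⟨q', rfl⟩
      positivity
    refine (csInf_le hmbdd hqmem).trans ?_
    have hqK : (Set.ncard (q.φ '' productSet H) : ℝ) / (Fintype.card q.K : ℝ)
        = (Set.ncard (ψ '' productSet H) : ℝ) / (Fintype.card K : ℝ) := rfl
    rw [hqK, div_le_div_iff₀ hKpos hmpos]
    calc (Set.ncard (ψ '' productSet H) : ℝ) * m
        ≤ ((P : ℝ) * ((Fintype.card K : ℝ) / m)) * m := by
          exact mul_le_mul_of_nonneg_right hncard_total (le_of_lt hmpos)
      _ = (P : ℝ) * (Fintype.card K : ℝ) := by field_simp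
  -- nonnegativity of the measure
  have hnonneg : 0 ≤ profiniteMeasure (productSet H) := by
    have hne : ∃ r : ℝ, r ∈ {r : ℝ | ∃ q : FiniteQuotient G,
        r = (Set.ncard (q.φ '' productSet H) : ℝ) / (Fintype.card q.K : ℝ)} := by
      haveI : Subsingleton (G ⧸ (⊤ : Subgroup G)) := QuotientGroup.subsingleton_quotient_top
      haveI : Finite (G ⧸ (⊤ : Subgroup G)) := Finite.of_subsingleton
      haveI : Fintype (G ⧸ (⊤ : Subgroup G)) := Fintype.ofFinite _
      exact ⟨_, ⟨⟨G ⧸ (⊤ : Subgroup G), QuotientGroup.mk' ⊤,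
        QuotientGroup.mk'_surjective ⊤⟩, rfl⟩⟩
    refine le_csInf ⟨_, hne.choose_spec⟩ ?_
    rintro r ⟨q', rfl⟩
    positivity
  -- conclusion
  refine le_antisymm ?_ hnonneg
  by_contra hlt
  push_neg at hlt
  obtain ⟨m, hm⟩ := exists_nat_gt ((P : ℝ) / profiniteMeasure (productSet H))
  have hmpos : 0 < m := by
    have h0 : (0 : ℝ) ≤ (P : ℝ) / profiniteMeasure (productSet H) := by positivity
    by_contra hm0
    push_neg at hm0
    interval_cases m
    simp at hm
    linarith
  have hkey := key m hmpos
  have hmR : (0 : ℝ) < (m : ℝ) := by exact_mod_cast hmpos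
  rw [div_lt_iff₀ hlt] at hm
  have : (P : ℝ) / (m : ℝ) < profiniteMeasure (productSet H) := by
    rw [div_lt_iff₀ hmR]
    linarith [hm]
  linarith
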